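/- Let L be a connected graded and locally finite dimensional pre-Lie algebra, with enveloping Hopf algebra (κ[L], *, Δ) and graded dual Hopf algebra (κ[L*], ·, δ). Then for all α, β ∈ L and w ∈ L*, one has ⟨α ◁ β | w⟩ = ⟨α ⊗ β | δ_irr(w)⟩ = ⟨α̂ ⊗ β̂ | δ̄(w)⟩, where δ_irr = δ₁ is the degree-one component of the dual of the brace product, δ̄(x) = δ(x) − 1⊗x − x⊗1 is the reduced coproduct on κ[L*], and α̂, β̂ are the infinitesimal characters on κ[L*] extending α, β (vanishing on monomials of polynomial degree ≠ 1). -/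

import Mathlib

open scoped BigOperators

variable {κ : Type*} [Field κ] {B : Type*}

/-- The symmetry factor `∏_b (count of b in I)!`: the pairing
`⟨b_I | b_I⟩ = Σ_{σ∈Sₙ} ∏ᵢ ⟨b_{σ(i)}|b_i⟩` of a monomial in the basis `{b_i}` of
`L*` against the corresponding monomial in the dual basis of `L`. -/
noncomputable def symmNatB (I : Multiset B) : ℕ :=
  haveI := Classical.decEq B
  ∏ b ∈ I.toFinset, (I.count b).factorial

/-- Given the structure constants `Λ` of the map `δ̄ = Σ_{n≥1} δₙ : L* → L* ⊗ κ[L*]`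
dual to the brace product (`δ̄(b_i) = Σ_{i₀,I≠∅} λ^{i;i₀}_I b_{i₀} ⊗ b_I`), this is
the coproduct `δ(b) = 1 ⊗ b + b ⊗ 1 + δ̄(b)` of the Hopf algebra `κ[L*]` evaluated
on a basis element `b ∈ L* ⊂ κ[L*]`, written in the monomial coordinates of
`κ[L*] ⊗ κ[L*]` (monomials of `κ[L*]` = multisets over the basis `B`). -/
noncomputable def deltaEltB (Λ : B → ((B × Multiset B) →₀ κ)) (b : B) :
    AddMonoidAlgebra κ (Multiset B × Multiset B) :=
  AddMonoidAlgebra.ofCoeff (Finsupp.single (0, {b}) 1 + Finsupp.single ({b}, 0) 1 +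
    (Λ b).sum fun p c => Finsupp.single ({p.1}, p.2) c)

/-- The coproduct `δ` on a monomial `b_I` of `κ[L*]`, computed using that `δ` is a
morphism of algebras. -/
noncomputable def deltaMonoB (Λ : B → ((B × Multiset B) →₀ κ))
    (I : Multiset B) : AddMonoidAlgebra κ (Multiset B × Multiset B) :=
  (I.map (deltaEltB Λ)).prod

/-- The reduced coproduct `δ̄(x) = δ(x) − 1 ⊗ x − x ⊗ 1` of `κ[L*]` on a monomial. -/
noncomputable def deltaBarMonoB (Λ : B → ((B × Multiset B) →₀ κ))
    (I : Multiset B) : AddMonoidAlgebra κ (Multiset B × Multiset B) :=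
  AddMonoidAlgebra.ofCoeff (id (α := (Multiset B × Multiset B) →₀ κ) (deltaMonoB Λ I).coeff
    - Finsupp.single (0, I) 1 - Finsupp.single (I, 0) 1)

/-- The iterated coproduct `δ^{[m+1]} : κ[L*] → κ[L*]^{⊗(m+1)}` on a monomial;
`δ^{[1]} = Id` and `δ^{[n+1]} = (δ ⊗ Id^{⊗n−1}) ∘ δ^{[n]}`. -/
noncomputable def iterDeltaB (Λ : B → ((B × Multiset B) →₀ κ)) :
    (m : ℕ) → Multiset B → ((Fin (m+1) → Multiset B) →₀ κ)
  | 0, I => Finsupp.single (fun _ => I) 1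
  | (m+1), I => (iterDeltaB Λ m I).sum fun f c =>
      (deltaMonoB Λ (f 0)).coeff.sum fun p d =>
        Finsupp.single (Fin.cons p.1 (Fin.cons p.2 (Fin.tail f))) (c * d)

/-- The iterated reduced coproduct `δ̄^{[m+1]} : κ[L*] → κ[L*]^{⊗(m+1)}` on a
monomial; `δ̄^{[1]} = Id` and `δ̄^{[n+1]} = (δ̄ ⊗ Id^{⊗n−1}) ∘ δ̄^{[n]}`. -/
noncomputable def iterBarB (Λ : B → ((B × Multiset B) →₀ κ)) :
    (m : ℕ) → Multiset B → ((Fin (m+1) → Multiset B) →₀ κ)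
  | 0, I => Finsupp.single (fun _ => I) 1
  | (m+1), I => (iterBarB Λ m I).sum fun f c =>
      (deltaBarMonoB Λ (f 0)).coeff.sum fun p d =>
        Finsupp.single (Fin.cons p.1 (Fin.cons p.2 (Fin.tail f))) (c * d)

/-- **Duality between the pre-Lie product and the coproduct** (Lemma 4.2).
Let `(L,◁)` be a connected graded, locally finite dimensional pre-Lie algebra,
presented by a homogeneous basis: `B` indexes a homogeneous basis of the graded
dual `L*` with degree function `deg` (so `L` is identified with `B →₀ κ` via the
dual basis); `pl = ◁` is the (bilinear, graded) pre-Lie product; `Br` is the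
Oudom–Guin symmetric brace operation of `(L,◁)`, and `Λ` records the coordinates
of the maps `δₙ : L* → L* ⊗ κ[L*]ₙ` dual to the brace products, i.e.
`δ̄ = Σ_{n≥1} δₙ` with `δ̄(b_i) = Σ_{i₀,I≠∅} λ^{i;i₀}_I b_{i₀} ⊗ b_I`.
Then for all `α, β ∈ L` and `w ∈ L*`:
`⟨α ◁ β | w⟩ = ⟨α ⊗ β | δ_irr(w)⟩ = ⟨α̂ ⊗ β̂ | δ̄(w)⟩`,
where `δ_irr = δ₁`, `δ̄(x) = δ(x) − 1⊗x − x⊗1` is the reduced coproduct of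
`κ[L*]`, and `α̂, β̂` are the infinitesimal characters on `κ[L*]` extending `α, β`
(vanishing on monomials of polynomial degree `≠ 1`). -/
theorem preLie_coproduct_duality [CharZero κ]
    (deg : B → ℕ) (hdeg : ∀ b, 1 ≤ deg b)
    (hfin : ∀ n, {b : B | deg b = n}.Finite)
    (pl : (B →₀ κ) →ₗ[κ] (B →₀ κ) →ₗ[κ] (B →₀ κ))
    (hpl : ∀ u v w : B →₀ κ,
      pl (pl u v) w - pl u (pl v w) = pl (pl u w) v - pl u (pl w v))
    (hplgrade : ∀ a b : B,
      ∀ x ∈ (pl (Finsupp.single a 1) (Finsupp.single b 1)).support,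
        deg x = deg a + deg b)
    (Br : (B →₀ κ) → List (B →₀ κ) → (B →₀ κ))
    (hBr1 : ∀ v w, Br v [w] = pl v w)
    (hBrrec : ∀ (v : B →₀ κ) (ws : List (B →₀ κ)) (w : B →₀ κ), ws ≠ [] →
      Br v (ws ++ [w]) =
        pl (Br v ws) w -
          ∑ i ∈ Finset.range ws.length, Br v (ws.set i (pl (ws.getD i 0) w)))
    (Λ : B → ((B × Multiset B) →₀ κ))
    (hΛ0 : ∀ (w : B) (p : B × Multiset B), p.2 = 0 → Λ w p = 0)
    (hdual : ∀ (n : ℕ), 1 ≤ n → ∀ (a : B) (γ : Fin n → B) (w : B),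
      (Br (Finsupp.single a 1) (List.ofFn fun i => Finsupp.single (γ i) 1)) w
        = Λ w (a, (↑(List.ofFn γ) : Multiset B))
            * symmNatB (↑(List.ofFn γ) : Multiset B)) :
    ∀ (α β : B →₀ κ) (w : B),
      ((pl α β) w
          = (Λ w).sum fun p c =>
              if Multiset.card p.2 = 1 then c * α p.1 * (p.2.map β).sum else 0)
      ∧
      ((pl α β) w
          = (deltaBarMonoB Λ ({w} : Multiset B)).coeff.sum fun q c =>
              c * (if Multiset.card q.1 = 1 then (q.1.map α).sum else 0)
                * (if Multiset.card q.2 = 1 then (q.2.map β).sum else 0)) := by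
    classical
  intro α β w
  -- Key identity: the n = 1 structure constants are the pre-Lie structure constants.
  have key : ∀ a γ : B, Λ w (a, ({γ} : Multiset B))
      = (pl (Finsupp.single a 1) (Finsupp.single γ 1)) w := by
    intro a γ
    have h := hdual 1 le_rfl a (fun _ => γ) w
    have hofn : (List.ofFn fun _ : Fin 1 => Finsupp.single γ (1:κ))
        = [Finsupp.single γ 1] := by simp [List.ofFn_succ]
    have hofn2 : ((↑(List.ofFn fun _ : Fin 1 => γ)) : Multiset B) = {γ} := by
      simp [List.ofFn_succ]
    rw [hofn, hBr1, hofn2] at h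
    have hs : symmNatB ({γ} : Multiset B) = 1 := by simp [symmNatB]
    rw [hs] at h
    simpa using h.symm
  -- Bilinear expansion of the pre-Lie product.
  have step : ∀ x : B,
      ((pl (∑ a ∈ α.support, Finsupp.single a (α a))) (Finsupp.single x (β x))) w
        = ∑ a ∈ α.support, α a * β x * Λ w (a, ({x} : Multiset B)) := by
    intro x
    rw [map_sum, LinearMap.sum_apply, Finsupp.finset_sum_apply]
    refine Finset.sum_congr rfl fun a ha => ?_
    have h1 : (Finsupp.single a (α a) : B →₀ κ) = α a • Finsupp.single a 1 := by
      rw [Finsupp.smul_single, smul_eq_mul, mul_one]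
    have h2 : (Finsupp.single x (β x) : B →₀ κ) = β x • Finsupp.single x 1 := by
      rw [Finsupp.smul_single, smul_eq_mul, mul_one]
    rw [h1, h2]
    simp only [map_smul, LinearMap.smul_apply, Finsupp.smul_apply, smul_eq_mul]
    rw [key a x]
    ring
  have expand : (pl α β) w
      = ∑ a ∈ α.support, ∑ g ∈ β.support, α a * β g * Λ w (a, ({g} : Multiset B)) := by
    conv_lhs => rw [← Finsupp.sum_single α, ← Finsupp.sum_single β]
    rw [Finsupp.sum, Finsupp.sum, map_sum, Finsupp.finset_sum_apply]
    rw [Finset.sum_congr rfl fun x _ => step x]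
    exact Finset.sum_comm
  -- The common value, as a sum over a large enough finset.
  set G : B × Multiset B → κ := fun p =>
    if Multiset.card p.2 = 1 then Λ w p * α p.1 * (p.2.map β).sum else 0 with hG
  have hG0 : ∀ p, G p
      = if Multiset.card p.2 = 1 then Λ w p * α p.1 * (p.2.map β).sum else 0 :=
    fun _ => rfl
  set T : Finset (B × Multiset B) :=
    (Λ w).support ∪ (α.support ×ˢ β.support).image
      (fun q : B × B => (q.1, ({q.2} : Multiset B))) with hT
  have hRHS : ((Λ w).sum fun p c =>
      if Multiset.card p.2 = 1 then c * α p.1 * (p.2.map β).sum else 0)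
      = ∑ p ∈ T, G p := by
    rw [Finsupp.sum_of_support_subset _ Finset.subset_union_left _
      (by intro p hp; simp)]
  have hinj : ∀ x ∈ α.support ×ˢ β.support, ∀ y ∈ α.support ×ˢ β.support,
      (fun q : B × B => (q.1, ({q.2} : Multiset B))) x
        = (fun q : B × B => (q.1, ({q.2} : Multiset B))) y → x = y := by
    intro x hx y hy hxy
    simp only [Prod.mk.injEq] at hxy
    exact Prod.ext hxy.1 (Multiset.singleton_inj.mp hxy.2)
  have hLHS : (∑ a ∈ α.support, ∑ g ∈ β.support, α a * β g * Λ w (a, ({g} : Multiset B)))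
      = ∑ p ∈ T, G p := by
    have h1 : ∑ q ∈ α.support ×ˢ β.support,
        α q.1 * β q.2 * Λ w (q.1, ({q.2} : Multiset B))
        = ∑ p ∈ (α.support ×ˢ β.support).image
            (fun q : B × B => (q.1, ({q.2} : Multiset B))), G p := by
      rw [Finset.sum_image hinj]
      refine Finset.sum_congr rfl fun q hq => ?_
      simp only [hG0, Multiset.card_singleton, eq_self_iff_true, if_true,
        Multiset.map_singleton, Multiset.sum_singleton]
      ring
    rw [← Finset.sum_product', h1]
    refine Finset.sum_subset Finset.subset_union_right fun p hp hnp => ?_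
    by_cases hc : Multiset.card p.2 = 1
    · obtain ⟨x, hx⟩ := Multiset.card_eq_one.mp hc
      have hz : α p.1 = 0 ∨ β x = 0 := by
        by_contra hcon
        push_neg at hcon
        exact hnp (Finset.mem_image.mpr ⟨(p.1, x),
          Finset.mem_product.mpr ⟨Finsupp.mem_support_iff.mpr hcon.1,
            Finsupp.mem_support_iff.mpr hcon.2⟩, by simp [← hx]⟩)
      rcases hz with h | h <;> simp [hG0, hc, hx, h]
    · simp [hG0, hc]
  have hfirst : (pl α β) w
      = (Λ w).sum fun p c =>
          if Multiset.card p.2 = 1 then c * α p.1 * (p.2.map β).sum else 0 := by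
    rw [expand, hLHS]
    exact hRHS.symm
  refine ⟨hfirst, ?_⟩
  -- Second form: the reduced coproduct on the singleton monomial.
  have hbar : (deltaBarMonoB Λ ({w} : Multiset B)).coeff
      = (Λ w).sum fun p c => Finsupp.single ((({p.1} : Multiset B), p.2)) c := by
    have hD : ((deltaMonoB Λ ({w} : Multiset B)).coeff : (Multiset B × Multiset B) →₀ κ)
        = (Finsupp.single ((0 : Multiset B), ({w} : Multiset B)) (1:κ)
            + Finsupp.single (({w} : Multiset B), (0 : Multiset B)) (1:κ)
            + ((Λ w).sum fun p c =>
                Finsupp.single ((({p.1} : Multiset B), p.2)) c)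
            : (Multiset B × Multiset B) →₀ κ) := by
      unfold deltaMonoB
      rw [Multiset.map_singleton, Multiset.prod_singleton]
      rfl
    unfold deltaBarMonoB
    simp only [id, AddMonoidAlgebra.coeff_ofCoeff]
    rw [hD]
    abel
  rw [hbar, hfirst]
  rw [Finsupp.sum_sum_index (fun _ => by ring) (fun _ _ _ => by ring)]
  refine Finsupp.sum_congr fun p hp => ?_
  rw [Finsupp.sum_single_index (by ring)]
  simp only [Multiset.card_singleton, eq_self_iff_true, if_true,
    Multiset.map_singleton, Multiset.sum_singleton]
  split_ifs with h <;> ring
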